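/- If 𝒞 is an LCD code of length n over R, then its Gray image Ψ(𝒞) is an LCD code of length 3n over F_q. -/
import Mathlib

open Polynomial

/-- The ring `R = F_q[v]/(v^3 - v)`. -/
noncomputable abbrev Rq (F : Type*) [Field F] : Type _ := AdjoinRoot (X ^ 3 - X : F[X])

/-- The image `v` of the indeterminate in `R = F_q[v]/(v^3 - v)`. -/
noncomputable abbrev vq (F : Type*) [Field F] : Rq F := AdjoinRoot.root _

/-- The Euclidean dual of a code: `C^⊥ = {x | ∀ y ∈ C, Σ xᵢyᵢ = 0}`. -/
def dualCode {S : Type*} [CommRing S] {ι : Type*} [Fintype ι]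
    (C : Submodule S (ι → S)) : Submodule S (ι → S) where
  carrier := {x | ∀ y ∈ C, ∑ i, x i * y i = 0}
  add_mem' := by
    intro a b ha hb y hy
    simp only [Set.mem_setOf_eq] at *
    simp [Pi.add_apply, add_mul, Finset.sum_add_distrib, ha y hy, hb y hy]
  zero_mem' := by intro y hy; simp
  smul_mem' := by
    intro c a ha y hy
    simp only [Set.mem_setOf_eq] at *
    simp [Pi.smul_apply, smul_eq_mul, mul_assoc, ← Finset.mul_sum, ha y hy]

section Aux

variable {F : Type*} [Field F]

lemma vq_cube (F : Type*) [Field F] : vq F ^ 3 = vq F := by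
  have h := AdjoinRoot.mk_self (f := (X ^ 3 - X : F[X]))
  rw [map_sub, map_pow, AdjoinRoot.mk_X, sub_eq_zero] at h
  exact h

lemma vq_four (F : Type*) [Field F] : vq F ^ 4 = vq F ^ 2 := by
  have : vq F ^ 4 = vq F ^ 3 * vq F := by ring
  rw [this, vq_cube]; ring

lemma repr_exists (r : Rq F) :
    ∃ a b c : F, r = algebraMap F (Rq F) a + vq F * algebraMap F (Rq F) b +
      vq F ^ 2 * algebraMap F (Rq F) c := by
  induction r using AdjoinRoot.induction_on with
  | ih p =>
    induction p using Polynomial.induction_on with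
    | C a =>
      exact ⟨a, 0, 0, by simp [AdjoinRoot.algebraMap_eq]⟩
    | add p q hp hq =>
      obtain ⟨a, b, c, h1⟩ := hp
      obtain ⟨a', b', c', h2⟩ := hq
      refine ⟨a + a', b + b', c + c', ?_⟩
      rw [map_add, h1, h2]
      simp only [map_add]
      ring
    | monomial m a hm =>
      obtain ⟨A, B, C, h⟩ := hm
      refine ⟨0, A + C, B, ?_⟩
      have key : (AdjoinRoot.mk (X ^ 3 - X : F[X])) (Polynomial.C a * X ^ (m + 1)) =
          (AdjoinRoot.mk (X ^ 3 - X : F[X])) (Polynomial.C a * X ^ m) * vq F := by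
        rw [show Polynomial.C a * X ^ (m + 1) = Polynomial.C a * X ^ m * X by ring,
          map_mul, AdjoinRoot.mk_X]
      rw [key, h]
      simp only [map_add, map_zero]
      linear_combination (algebraMap F (Rq F) C) * vq_cube F

lemma mul_repr (a b c a' b' c' : F) :
    (algebraMap F (Rq F) a + vq F * algebraMap F (Rq F) b + vq F ^ 2 * algebraMap F (Rq F) c) *
      (algebraMap F (Rq F) a' + vq F * algebraMap F (Rq F) b' +
        vq F ^ 2 * algebraMap F (Rq F) c') =
    algebraMap F (Rq F) (a * a') +
      vq F * algebraMap F (Rq F) (a * b' + b * a' + b * c' + c * b') +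
      vq F ^ 2 * algebraMap F (Rq F) (a * c' + b * b' + c * a' + c * c') := by
  simp only [map_add, map_mul]
  linear_combination (algebraMap F (Rq F) b * algebraMap F (Rq F) c' +
      algebraMap F (Rq F) c * algebraMap F (Rq F) b') * vq_cube F +
    (algebraMap F (Rq F) c * algebraMap F (Rq F) c') * vq_four F

end Aux

/-- If `𝒞` is an LCD code of length `n` over `R = F_q[v]/(v^3 - v)`, then its Gray
image `Ψ(𝒞)` is an LCD code of length `3n` over `F_q`. -/
theorem stmt_7 (F : Type*) [Field F] [Fintype F] (hodd : Odd (Fintype.card F)) (n : ℕ)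
    (𝒞 : Submodule (Rq F) (Fin n → Rq F)) (hLCD : 𝒞 ⊓ dualCode 𝒞 = ⊥)
    (Ψ : (Fin n → Rq F) →ₗ[F] (Fin n × Fin 3 → F))
    (hΨ : ∀ a b c : Fin n → F,
      Ψ (fun i => algebraMap F (Rq F) (a i) + vq F * algebraMap F (Rq F) (b i) +
          vq F ^ 2 * algebraMap F (Rq F) (c i)) =
        fun p => ![a p.1, a p.1 + b p.1 + c p.1, a p.1 - b p.1 + c p.1] p.2)
 :
    Submodule.map Ψ (Submodule.restrictScalars F 𝒞) ⊓
      dualCode (Submodule.map Ψ (Submodule.restrictScalars F 𝒞)) = ⊥ := by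
  -- characteristic is odd, so 2 ≠ 0 in F
  have hchar : ringChar F ≠ 2 := by
    intro h
    have h0 := FiniteField.even_card_of_char_two h
    rw [Nat.odd_iff] at hodd
    omega
  have h2 : (2 : F) ≠ 0 := by
    intro h
    have hdvd : ringChar F ∣ 2 := (CharP.cast_eq_zero_iff F (ringChar F) 2).mp (by exact_mod_cast h)
    rcases (Nat.dvd_prime Nat.prime_two).mp hdvd with h1 | h1
    · exact CharP.ringChar_ne_one h1
    · exact hchar h1
  rw [eq_bot_iff]
  rintro x hx
  rw [Submodule.mem_inf] at hx
  obtain ⟨hx1, hx2⟩ := hx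
  obtain ⟨u, hu𝒞, rfl⟩ := hx1
  rw [Submodule.mem_bot]
  have hu𝒞' : u ∈ 𝒞 := hu𝒞
  suffices hu0 : u = 0 by rw [hu0, map_zero]
  have hudual : u ∈ dualCode 𝒞 := by
    intro y hy
    -- coordinates of u and y
    choose a b c ha using fun i => repr_exists (u i)
    choose a' b' c' ha' using fun i => repr_exists (y i)
    have hufun : u = fun i => algebraMap F (Rq F) (a i) + vq F * algebraMap F (Rq F) (b i) +
        vq F ^ 2 * algebraMap F (Rq F) (c i) := funext ha
    have hyfun : y = fun i => algebraMap F (Rq F) (a' i) + vq F * algebraMap F (Rq F) (b' i) +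
        vq F ^ 2 * algebraMap F (Rq F) (c' i) := funext ha'
    -- coordinates of v • y and v² • y
    have hvy : vq F • y = fun i => algebraMap F (Rq F) ((fun _ => (0:F)) i) +
        vq F * algebraMap F (Rq F) ((fun i => a' i + c' i) i) +
        vq F ^ 2 * algebraMap F (Rq F) ((fun i => b' i) i) := by
      funext i
      simp only [Pi.smul_apply, smul_eq_mul, ha' i, map_add, map_zero]
      linear_combination (algebraMap F (Rq F) (c' i)) * vq_cube F
    have hv2y : (vq F ^ 2) • y = fun i => algebraMap F (Rq F) ((fun _ => (0:F)) i) +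
        vq F * algebraMap F (Rq F) ((fun i => b' i) i) +
        vq F ^ 2 * algebraMap F (Rq F) ((fun i => a' i + c' i) i) := by
      funext i
      simp only [Pi.smul_apply, smul_eq_mul, ha' i, map_add, map_zero]
      linear_combination (algebraMap F (Rq F) (b' i)) * vq_cube F +
        (algebraMap F (Rq F) (c' i)) * vq_four F
    -- the key: Gray images of code words are orthogonal to Ψ u
    have key : ∀ w, w ∈ 𝒞 → ∑ p, Ψ u p * Ψ w p = 0 := by
      intro w hw
      exact hx2 (Ψ w) ⟨w, hw, rfl⟩
    set A := ∑ i, a i * a' i with hA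
    set B := ∑ i, (a i * b' i + b i * a' i + b i * c' i + c i * b' i) with hB
    set C := ∑ i, (a i * c' i + b i * b' i + c i * a' i + c i * c' i) with hC
    have E1 : 3 * A + 2 * C = 0 := by
      have h := key y hy
      rw [hufun, hyfun, hΨ, hΨ, Fintype.sum_prod_type] at h
      simp only [Fin.sum_univ_three, Matrix.cons_val_zero, Matrix.cons_val_one,
        Matrix.head_cons, Matrix.cons_val_two, Matrix.tail_cons] at h
      rw [hA, hC, ← h]
      simp only [Finset.mul_sum, ← Finset.sum_add_distrib]
      exact Finset.sum_congr rfl fun i _ => by ring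
    have E2 : 2 * B = 0 := by
      have h := key (vq F • y) (Submodule.smul_mem 𝒞 _ hy)
      rw [hufun, hvy, hΨ, hΨ, Fintype.sum_prod_type] at h
      simp only [Fin.sum_univ_three, Matrix.cons_val_zero, Matrix.cons_val_one,
        Matrix.head_cons, Matrix.cons_val_two, Matrix.tail_cons] at h
      rw [hB, Finset.mul_sum, ← h]
      exact Finset.sum_congr rfl fun i _ => by ring
    have E3 : 2 * A + 2 * C = 0 := by
      have h := key ((vq F ^ 2) • y) (Submodule.smul_mem 𝒞 _ hy)
      rw [hufun, hv2y, hΨ, hΨ, Fintype.sum_prod_type] at h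
      simp only [Fin.sum_univ_three, Matrix.cons_val_zero, Matrix.cons_val_one,
        Matrix.head_cons, Matrix.cons_val_two, Matrix.tail_cons] at h
      rw [hA, hC, ← h]
      simp only [Finset.mul_sum, ← Finset.sum_add_distrib]
      exact Finset.sum_congr rfl fun i _ => by ring
    have hA0 : A = 0 := by linear_combination E1 - E3
    have hC0 : C = 0 := by
      have h2C : 2 * C = 0 := by linear_combination E3 - 2 * hA0
      rcases mul_eq_zero.mp h2C with h | h
      · exact absurd h h2
      · exact h
    have hB0 : B = 0 := by
      rcases mul_eq_zero.mp E2 with h | h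
      · exact absurd h h2
      · exact h
    -- now compute the inner product over R
    calc ∑ i, u i * y i
        = ∑ i, (algebraMap F (Rq F) (a i * a' i) +
            vq F * algebraMap F (Rq F)
              (a i * b' i + b i * a' i + b i * c' i + c i * b' i) +
            vq F ^ 2 * algebraMap F (Rq F)
              (a i * c' i + b i * b' i + c i * a' i + c i * c' i)) := by
          refine Finset.sum_congr rfl fun i _ => ?_
          rw [ha i, ha' i, mul_repr]
      _ = algebraMap F (Rq F) A + vq F * algebraMap F (Rq F) B +
            vq F ^ 2 * algebraMap F (Rq F) C := by
          rw [hA, hB, hC, map_sum, map_sum, map_sum, Finset.mul_sum, Finset.mul_sum,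
            ← Finset.sum_add_distrib, ← Finset.sum_add_distrib]
      _ = 0 := by rw [hA0, hB0, hC0]; simp
  have : u ∈ 𝒞 ⊓ dualCode 𝒞 := ⟨hu𝒞', hudual⟩
  rw [hLCD, Submodule.mem_bot] at this
  exact this
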